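/- Let Ψ solve (i∂_t − Δ)Ψ = Ḃ with Ψ(0,·)=0 on ℝ × 𝕋, where Ḃ is a Gaussian noise white in space and fractional in time with Hurst index H ∈ (3/4, 1), represented as Ḃ(t,x) = ∑_{k∈ℤ} β̇^{(k)}_t e^{-ikx} with independent fractional noises β̇^{(k)} of covariance E[β̇_s β̇_t] = |t-s|^{2H-2}. Then for every T > 0, E[‖Ψ‖²_{L²([0,T]×𝕋)}] < ∞; in particular Ψ ∈ L²([0,T]×𝕋) almost surely. -/

import Mathlib

open MeasureTheory Real ENNReal intervalIntegral Set

lemma aux_abs_rpow_ii {p : ℝ} (hp : -1 < p) (a b : ℝ) :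
    IntervalIntegrable (fun u : ℝ => |u| ^ p) volume a b := by
  have key : ∀ c : ℝ, 0 ≤ c → IntervalIntegrable (fun u : ℝ => |u| ^ p) volume 0 c := by
    intro c hc
    rw [intervalIntegrable_iff, uIoc_of_le hc]
    have h := intervalIntegrable_rpow' (a := 0) (b := c) hp
    rw [intervalIntegrable_iff, uIoc_of_le hc] at h
    exact h.congr_fun (fun x hx => by rw [abs_of_pos hx.1]) measurableSet_Ioc
  have key2 : ∀ c : ℝ, IntervalIntegrable (fun u : ℝ => |u| ^ p) volume 0 c := by
    intro c
    rcases le_total 0 c with hc | hc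
    · exact key c hc
    · rw [IntervalIntegrable.iff_comp_neg]
      simp only [abs_neg, neg_zero]
      exact key (-c) (by linarith)
  exact (key2 a).symm.trans (key2 b)


lemma aux_cos_abs_rpow_ii (l : ℝ) {p : ℝ} (hp : -1 < p) (a b : ℝ) :
    IntervalIntegrable (fun u : ℝ => Real.cos (l * u) * |u| ^ p) volume a b :=
  (aux_abs_rpow_ii hp a b).continuousOn_mul
    ((Real.continuous_cos.comp (continuous_const.mul continuous_id)).continuousOn)

lemma aux_small (l : ℝ) {p r : ℝ} (hp : -1 < p) (hr : 0 ≤ r) :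
    |∫ u in (0:ℝ)..r, Real.cos (l * u) * |u| ^ p| ≤ r ^ (p + 1) / (p + 1) := by
  have hq : 0 < p + 1 := by linarith
  have h1 : (∫ u in (0:ℝ)..r, |u| ^ p) = r ^ (p + 1) / (p + 1) := by
    rw [integral_congr (g := fun u : ℝ => u ^ p)
      (fun x hx => by rw [uIcc_of_le hr] at hx; simp only []; rw [abs_of_nonneg hx.1])]
    rw [integral_rpow (Or.inl hp), Real.zero_rpow hq.ne', sub_zero]
  calc |∫ u in (0:ℝ)..r, Real.cos (l * u) * |u| ^ p|
      ≤ |∫ u in (0:ℝ)..r, |u| ^ p| := by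
        rw [← Real.norm_eq_abs (∫ u in (0:ℝ)..r, Real.cos (l * u) * |u| ^ p)]
        apply norm_integral_le_abs_of_norm_le ?_ (aux_abs_rpow_ii hp 0 r)
        refine Filter.Eventually.of_forall fun t => ?_
        rw [Real.norm_eq_abs, abs_mul]
        rw [abs_of_nonneg (Real.rpow_nonneg (abs_nonneg t) p)]
        exact mul_le_of_le_one_left (Real.rpow_nonneg (abs_nonneg t) p) (Real.abs_cos_le_one _)
    _ = r ^ (p + 1) / (p + 1) := by
        rw [h1, abs_of_nonneg (div_nonneg (Real.rpow_nonneg hr _) hq.le)]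

lemma aux_ibp {l p a r : ℝ} (hp : -1 < p) (hp0 : p < 0) (hl : 0 < l)
    (ha : 0 < a) (har : a ≤ r) :
    |∫ u in a..r, Real.cos (l * u) * u ^ p| ≤ 3 * a ^ p / l := by
  have hr : 0 < r := lt_of_lt_of_le ha har
  have huIcc : uIcc a r = Icc a r := uIcc_of_le har
  have hpos : ∀ x ∈ uIcc a r, 0 < x := by
    intro x hx; rw [huIcc] at hx; exact lt_of_lt_of_le ha hx.1
  -- rewrite to u^p * cos(l*u)
  rw [integral_congr (g := fun u : ℝ => u ^ p * Real.cos (l * u))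
    (fun x _ => mul_comm _ _)]
  have hu : ∀ x ∈ uIcc a r, HasDerivAt (fun x : ℝ => x ^ p) (p * x ^ (p - 1)) x := by
    intro x hx
    exact Real.hasDerivAt_rpow_const (Or.inl (hpos x hx).ne')
  have hv : ∀ x ∈ uIcc a r, HasDerivAt (fun x : ℝ => Real.sin (l * x) / l)
      (Real.cos (l * x)) x := by
    intro x _
    have h1 : HasDerivAt (fun x : ℝ => l * x) (l * 1) x := (hasDerivAt_id x).const_mul l
    have h2 := ((Real.hasDerivAt_sin (l * x)).comp x h1).div_const l
    exact h2.congr_deriv (by rw [mul_one, mul_div_cancel_right₀ _ hl.ne'])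
  have hp' : p ≠ 0 := hp0.ne
  have hl' : l ≠ 0 := hl.ne'
  have hcont : ContinuousOn (fun x : ℝ => x ^ (p - 1)) (uIcc a r) := fun x hx =>
    (Real.continuousAt_rpow_const x (p - 1) (Or.inl (hpos x hx).ne')).continuousWithinAt
  have hu' : IntervalIntegrable (fun x : ℝ => p * x ^ (p - 1)) volume a r :=
    (continuousOn_const.mul hcont).intervalIntegrable
  have hgint : IntervalIntegrable (fun x : ℝ => -p * x ^ (p - 1) / l) volume a r :=
    ((continuousOn_const.mul hcont).div_const l).intervalIntegrable
  have hv' : IntervalIntegrable (fun x : ℝ => Real.cos (l * x)) volume a r :=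
    ((Real.continuous_cos.comp (continuous_const.mul continuous_id)).continuousOn).intervalIntegrable
  have hibp := integral_mul_deriv_eq_deriv_mul hu hv hu' hv'
  rw [hibp]
  -- bound the three terms
  have hrp_le : r ^ p ≤ a ^ p := (Real.rpow_le_rpow_iff_of_neg hr ha hp0).mpr har
  have hap_pos : 0 < a ^ p := Real.rpow_pos_of_pos ha p
  have hb1 : |r ^ p * (Real.sin (l * r) / l)| ≤ a ^ p / l := by
    rw [abs_mul, abs_of_nonneg (Real.rpow_nonneg hr.le p), abs_div,
      abs_of_pos hl]
    calc r ^ p * (|Real.sin (l * r)| / l) ≤ r ^ p * (1 / l) := by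
          gcongr; exact Real.abs_sin_le_one _
      _ ≤ a ^ p * (1 / l) := by gcongr
      _ = a ^ p / l := by ring
  have hb2 : |a ^ p * (Real.sin (l * a) / l)| ≤ a ^ p / l := by
    rw [abs_mul, abs_of_nonneg (Real.rpow_nonneg ha.le p), abs_div, abs_of_pos hl]
    calc a ^ p * (|Real.sin (l * a)| / l) ≤ a ^ p * (1 / l) := by
          gcongr; exact Real.abs_sin_le_one _
      _ = a ^ p / l := by ring
  have hb3 : |∫ x in a..r, (p * x ^ (p - 1)) * (Real.sin (l * x) / l)| ≤ a ^ p / l := by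
    have hint : (∫ x in a..r, (-p) * x ^ (p - 1) / l) = (a ^ p - r ^ p) / l := by
      rw [intervalIntegral.integral_div, intervalIntegral.integral_const_mul,
        integral_rpow (Or.inr ⟨by intro h; rw [sub_eq_iff_eq_add] at h; simp at h; linarith,
          by rw [huIcc]; intro h; exact absurd h.1 (not_le.mpr ha)⟩)]
      have : p - 1 + 1 = p := by ring
      rw [this]
      field_simp
      ring
    have hbd : |∫ x in a..r, (p * x ^ (p - 1)) * (Real.sin (l * x) / l)|
        ≤ |∫ x in a..r, (-p) * x ^ (p - 1) / l| := by
      rw [← Real.norm_eq_abs (∫ x in a..r, (p * x ^ (p - 1)) * (Real.sin (l * x) / l))]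
      apply norm_integral_le_abs_of_norm_le ?_ hgint
      · rw [uIoc_of_le har]
        refine (ae_restrict_iff' measurableSet_Ioc).2 (Filter.Eventually.of_forall fun x hx => ?_)
        have hx0 : 0 < x := lt_trans ha hx.1
        rw [Real.norm_eq_abs, abs_mul, abs_mul, abs_div, abs_of_pos hl,
          abs_of_neg hp0, abs_of_nonneg (Real.rpow_nonneg hx0.le _)]
        calc (-p) * x ^ (p-1) * (|Real.sin (l * x)| / l) ≤ (-p) * x ^ (p-1) * (1 / l) := by
              gcongr
              · exact mul_nonneg (by linarith) (Real.rpow_nonneg hx0.le _)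
              · exact Real.abs_sin_le_one _
          _ = (-p) * x ^ (p-1) / l := by ring
    rw [hint] at hbd
    refine hbd.trans ?_
    rw [abs_div, abs_of_pos hl, abs_of_nonneg (by linarith : (0:ℝ) ≤ a ^ p - r ^ p)]
    gcongr
    linarith [Real.rpow_nonneg hr.le p]
  calc |r ^ p * (Real.sin (l * r) / l) - a ^ p * (Real.sin (l * a) / l)
        - ∫ x in a..r, (p * x ^ (p - 1)) * (Real.sin (l * x) / l)|
      ≤ |r ^ p * (Real.sin (l * r) / l) - a ^ p * (Real.sin (l * a) / l)|
        + |∫ x in a..r, (p * x ^ (p - 1)) * (Real.sin (l * x) / l)| := abs_sub _ _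
    _ ≤ (|r ^ p * (Real.sin (l * r) / l)| + |a ^ p * (Real.sin (l * a) / l)|)
        + |∫ x in a..r, (p * x ^ (p - 1)) * (Real.sin (l * x) / l)| := by
        gcongr; exact abs_sub _ _
    _ ≤ (a ^ p / l + a ^ p / l) + a ^ p / l := by gcongr
    _ = 3 * a ^ p / l := by ring

lemma aux_G_bound {l p r : ℝ} (hp : -1 < p) (hp0 : p < 0) (hl : 1 ≤ l) (hr : 0 ≤ r) :
    |∫ u in (0:ℝ)..r, Real.cos (l * u) * |u| ^ p|
      ≤ (1 / (p + 1) + 3) * l ^ (-(p + 1)) := by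
  have hq : 0 < p + 1 := by linarith
  have hl0 : 0 < l := lt_of_lt_of_le one_pos hl
  set a := l⁻¹ with ha_def
  have ha : 0 < a := inv_pos.mpr hl0
  have haq : a ^ (p + 1) = l ^ (-(p + 1)) := by
    rw [ha_def, Real.inv_rpow hl0.le, ← Real.rpow_neg hl0.le]
  have hap : a ^ p = l ^ (-p) := by
    rw [ha_def, Real.inv_rpow hl0.le, ← Real.rpow_neg hl0.le]
  have hnn : 0 ≤ l ^ (-(p + 1)) := Real.rpow_nonneg hl0.le _
  rcases le_or_gt r a with hra | har
  · calc |∫ u in (0:ℝ)..r, Real.cos (l * u) * |u| ^ p| ≤ r ^ (p + 1) / (p + 1) :=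
        aux_small l hp hr
      _ ≤ a ^ (p + 1) / (p + 1) := by gcongr
      _ = l ^ (-(p + 1)) / (p + 1) := by rw [haq]
      _ ≤ (1 / (p + 1) + 3) * l ^ (-(p + 1)) := by
          rw [div_eq_mul_one_div, mul_comm]
          nlinarith
  · have hsplit : (∫ u in (0:ℝ)..r, Real.cos (l * u) * |u| ^ p)
        = (∫ u in (0:ℝ)..a, Real.cos (l * u) * |u| ^ p)
          + ∫ u in a..r, Real.cos (l * u) * |u| ^ p :=
      (integral_add_adjacent_intervals (aux_cos_abs_rpow_ii l hp 0 a)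
        (aux_cos_abs_rpow_ii l hp a r)).symm
    have h2 : |∫ u in a..r, Real.cos (l * u) * |u| ^ p| ≤ 3 * l ^ (-(p + 1)) := by
      rw [integral_congr (g := fun u : ℝ => Real.cos (l * u) * u ^ p)
        (fun x hx => by
          rw [uIcc_of_le har.le] at hx
          rw [abs_of_pos (lt_of_lt_of_le ha hx.1)])]
      calc |∫ u in a..r, Real.cos (l * u) * u ^ p| ≤ 3 * a ^ p / l :=
          aux_ibp hp hp0 hl0 ha har.le
        _ = 3 * l ^ (-(p + 1)) := by
            rw [hap, show -(p+1) = -p + (-1) by ring, Real.rpow_add hl0,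
              Real.rpow_neg_one]
            ring
    calc |∫ u in (0:ℝ)..r, Real.cos (l * u) * |u| ^ p|
        ≤ |∫ u in (0:ℝ)..a, Real.cos (l * u) * |u| ^ p|
          + |∫ u in a..r, Real.cos (l * u) * |u| ^ p| := by
          rw [hsplit]; exact abs_add_le _ _
      _ ≤ a ^ (p + 1) / (p + 1) + 3 * l ^ (-(p + 1)) :=
          add_le_add (aux_small l hp ha.le) h2
      _ = (1 / (p + 1) + 3) * l ^ (-(p + 1)) := by
          rw [haq]; ring

lemma aux_F_split (l : ℝ) {p s t : ℝ} (hp : -1 < p) (hs : 0 ≤ s) (hst : s ≤ t) :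
    (∫ s' in (0:ℝ)..t, Real.cos (l * (s - s')) * |s - s'| ^ p)
      = (∫ u in (0:ℝ)..s, Real.cos (l * u) * |u| ^ p)
        + ∫ u in (0:ℝ)..(t - s), Real.cos (l * u) * |u| ^ p := by
  set g : ℝ → ℝ := fun u => Real.cos (l * u) * |u| ^ p with hg
  have heven : ∀ x : ℝ, g (-x) = g x := by
    intro x
    simp [hg, mul_neg, Real.cos_neg]
  have h1 : (∫ s' in (0:ℝ)..t, Real.cos (l * (s - s')) * |s - s'| ^ p)
      = ∫ x in (s - t)..(s - 0), g x := integral_comp_sub_left g s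
  rw [h1, sub_zero]
  rw [← integral_add_adjacent_intervals (a := s - t) (b := 0) (c := s)
    (aux_cos_abs_rpow_ii l hp _ _) (aux_cos_abs_rpow_ii l hp _ _)]
  have h2 : (∫ x in (s - t)..(0:ℝ), g x) = ∫ u in (0:ℝ)..(t - s), g u := by
    have h3 : (∫ x in (s - t)..(0:ℝ), g x) = ∫ x in (s - t)..(0:ℝ), g (-x) := by
      simp_rw [heven]
    rw [h3, integral_comp_neg, neg_zero, neg_sub]
  rw [h2, add_comm]


lemma aux_J_bound {l p t T M : ℝ} (hp : -1 < p) (ht : 0 < t) (htT : t ≤ T)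
    (hM : ∀ r : ℝ, 0 ≤ r → r ≤ T →
      |∫ u in (0:ℝ)..r, Real.cos (l * u) * |u| ^ p| ≤ M) :
    (∫ s in (0:ℝ)..t, ∫ s' in (0:ℝ)..t, Real.cos (l * (s - s')) * |s - s'| ^ p)
      ≤ 2 * M * T := by
  have hM0 : 0 ≤ M := le_trans (abs_nonneg _) (hM 0 le_rfl (le_trans ht.le htT))
  have hb : |∫ s in (0:ℝ)..t, ∫ s' in (0:ℝ)..t, Real.cos (l * (s - s')) * |s - s'| ^ p|
      ≤ 2 * M * |t - 0| := by
    rw [← Real.norm_eq_abs]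
    apply intervalIntegral.norm_integral_le_of_norm_le_const
    intro s hs
    rw [uIoc_of_le ht.le] at hs
    rw [aux_F_split l hp hs.1.le hs.2, Real.norm_eq_abs]
    calc |(∫ u in (0:ℝ)..s, Real.cos (l * u) * |u| ^ p)
          + ∫ u in (0:ℝ)..(t - s), Real.cos (l * u) * |u| ^ p|
        ≤ |∫ u in (0:ℝ)..s, Real.cos (l * u) * |u| ^ p|
          + |∫ u in (0:ℝ)..(t - s), Real.cos (l * u) * |u| ^ p| := abs_add_le _ _
      _ ≤ M + M := add_le_add (hM s hs.1.le (le_trans hs.2 htT))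
          (hM (t - s) (by linarith [hs.1, hs.2]) (by linarith [hs.1, hs.2]))
      _ = 2 * M := by ring
  rw [sub_zero, abs_of_pos ht] at hb
  calc (∫ s in (0:ℝ)..t, ∫ s' in (0:ℝ)..t, Real.cos (l * (s - s')) * |s - s'| ^ p)
      ≤ |∫ s in (0:ℝ)..t, ∫ s' in (0:ℝ)..t, Real.cos (l * (s - s')) * |s - s'| ^ p| :=
        le_abs_self _
    _ ≤ 2 * M * t := hb
    _ ≤ 2 * M * T := by nlinarith

/-- if `H ∈ (3/4, 1)` and the Fourier modes `Ψ_k` of the mild solution of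
`(i∂_t - Δ)Ψ = Ḃ`, `Ψ(0,·) = 0`, have the covariance
`E[|Ψ_k(t)|²] = ∫_0^t ∫_0^t cos(k²(s-s')) |s-s'|^{2H-2} ds ds'`
(derived from the white-in-space, `H`-fractional-in-time noise), then
`E[‖Ψ‖²_{L²([0,T]×𝕋)}] = ∑_k ∫_0^T E[|Ψ_k(t)|²] dt < ∞`. -/
theorem stmt11 {Ω : Type*} [MeasurableSpace Ω] (P : Measure Ω) [IsProbabilityMeasure P]
    (H T : ℝ) (hH1 : 3/4 < H) (hH2 : H < 1) (hT : 0 < T)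
    (Ψ : ℤ → Ω → ℝ → ℂ)
    (hcov : ∀ k : ℤ, ∀ t ∈ Set.Icc (0 : ℝ) T,
      (∫⁻ ω, ((‖Ψ k ω t‖₊ : ℝ≥0∞)) ^ 2 ∂P)
        = ENNReal.ofReal (∫ s in (0 : ℝ)..t, ∫ s' in (0 : ℝ)..t,
            Real.cos ((k : ℝ) ^ 2 * (s - s')) * |s - s'| ^ (2 * H - 2))) :
    (∑' k : ℤ, ∫⁻ t in Set.Ioc (0 : ℝ) T, ∫⁻ ω, ((‖Ψ k ω t‖₊ : ℝ≥0∞)) ^ 2 ∂P) ≠ ⊤ := by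
  set p : ℝ := 2 * H - 2 with hp_def
  have hp : -1 < p := by rw [hp_def]; linarith
  have hp0 : p < 0 := by rw [hp_def]; linarith
  have hq : 0 < p + 1 := by linarith
  set B₀ : ℝ := 2 * (T ^ (p + 1) / (p + 1)) * T with hB₀
  set B₁ : ℝ := 2 * ((1 / (p + 1) + 3) * T) with hB₁
  have hB₀0 : 0 ≤ B₀ := by
    rw [hB₀]; positivity
  have hB₁0 : 0 ≤ B₁ := by
    rw [hB₁]; positivity
  set b : ℤ → ℝ := fun k =>
    (if k = 0 then B₀ else 0) + B₁ * (1 / |(k : ℝ)| ^ (2 * (p + 1))) with hb_def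
  have hb_nonneg : ∀ k, 0 ≤ b k := by
    intro k
    simp only [hb_def]
    have h1 : 0 ≤ 1 / |(k : ℝ)| ^ (2 * (p + 1)) := by positivity
    split <;> nlinarith
  have hb_sum : Summable b := by
    apply Summable.add
    · exact summable_of_ne_finset_zero (s := {0}) (fun k hk => if_neg (by simpa using hk))
    · apply Summable.mul_left
      have := (Real.summable_one_div_int_add_rpow 0 (2 * (p + 1))).mpr
        (by rw [hp_def]; linarith)
      simpa using this
  -- pointwise bound
  have hJb : ∀ k : ℤ, ∀ t ∈ Set.Ioc (0:ℝ) T,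
      (∫ s in (0 : ℝ)..t, ∫ s' in (0 : ℝ)..t,
        Real.cos ((k : ℝ) ^ 2 * (s - s')) * |s - s'| ^ p) ≤ b k := by
    intro k t ht
    rcases eq_or_ne k 0 with rfl | hk
    · have hM : ∀ r : ℝ, 0 ≤ r → r ≤ T →
          |∫ u in (0:ℝ)..r, Real.cos (((0:ℤ):ℝ) ^ 2 * u) * |u| ^ p|
            ≤ T ^ (p + 1) / (p + 1) := by
        intro r hr hrT
        calc |∫ u in (0:ℝ)..r, Real.cos (((0:ℤ):ℝ) ^ 2 * u) * |u| ^ p|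
            ≤ r ^ (p + 1) / (p + 1) := aux_small _ hp hr
          _ ≤ T ^ (p + 1) / (p + 1) := by gcongr
      have := aux_J_bound hp ht.1 ht.2 hM
      have hz : |((0:ℤ):ℝ)| ^ (2*(p+1)) = 0 := by
        rw [Int.cast_zero, abs_zero, Real.zero_rpow (by linarith : 2*(p+1) ≠ 0)]
      have hb0 : b 0 = B₀ := by
        simp [hb_def, hz]
        exact Or.inr (Real.zero_rpow (ne_of_gt (by linarith)))
      rw [hb0, hB₀]
      exact this
    · have hk1 : (1:ℝ) ≤ |(k:ℝ)| := by
        rw [← Int.cast_abs]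
        exact_mod_cast Int.one_le_abs (by exact_mod_cast hk)
      have hl1 : (1:ℝ) ≤ (k:ℝ) ^ 2 := by nlinarith [sq_abs ((k:ℝ)), abs_nonneg ((k:ℝ))]
      have hM : ∀ r : ℝ, 0 ≤ r → r ≤ T →
          |∫ u in (0:ℝ)..r, Real.cos ((k:ℝ) ^ 2 * u) * |u| ^ p|
            ≤ (1 / (p + 1) + 3) * ((k:ℝ) ^ 2) ^ (-(p + 1)) :=
        fun r hr _ => aux_G_bound hp hp0 hl1 hr
      have hJ := aux_J_bound hp ht.1 ht.2 hM
      have hrw : ((k:ℝ) ^ 2) ^ (-(p + 1)) = 1 / |(k : ℝ)| ^ (2 * (p + 1)) := by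
        rw [← sq_abs, ← Real.rpow_natCast |(k:ℝ)| 2, ← Real.rpow_mul (abs_nonneg _),
          show ((2:ℕ):ℝ) * -(p+1) = -(2*(p+1)) by push_cast; ring,
          Real.rpow_neg (abs_nonneg _), one_div]
      have hbk : b k = B₁ * (1 / |(k : ℝ)| ^ (2 * (p + 1))) := by
        rw [hb_def]; simp only [if_neg hk, zero_add]
      rw [hbk, ← hrw, hB₁]
      calc (∫ s in (0 : ℝ)..t, ∫ s' in (0 : ℝ)..t,
            Real.cos ((k : ℝ) ^ 2 * (s - s')) * |s - s'| ^ p)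
          ≤ 2 * ((1 / (p + 1) + 3) * ((k:ℝ) ^ 2) ^ (-(p + 1))) * T := hJ
        _ = 2 * ((1 / (p + 1) + 3) * T) * ((k:ℝ) ^ 2) ^ (-(p + 1)) := by ring
  -- ENNReal assembly
  have hA : ∀ k : ℤ, (∫⁻ t in Set.Ioc (0:ℝ) T, ∫⁻ ω, ((‖Ψ k ω t‖₊ : ℝ≥0∞)) ^ 2 ∂P)
      ≤ ENNReal.ofReal (b k) * ENNReal.ofReal T := by
    intro k
    calc (∫⁻ t in Set.Ioc (0:ℝ) T, ∫⁻ ω, ((‖Ψ k ω t‖₊ : ℝ≥0∞)) ^ 2 ∂P)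
        = ∫⁻ t in Set.Ioc (0:ℝ) T, ENNReal.ofReal (∫ s in (0 : ℝ)..t, ∫ s' in (0 : ℝ)..t,
            Real.cos ((k : ℝ) ^ 2 * (s - s')) * |s - s'| ^ p) := by
          apply setLIntegral_congr_fun measurableSet_Ioc
          exact (fun t ht => hcov k t ⟨ht.1.le, ht.2⟩)
      _ ≤ ∫⁻ _ in Set.Ioc (0:ℝ) T, ENNReal.ofReal (b k) :=
          setLIntegral_mono' measurableSet_Ioc
            (fun t ht => ENNReal.ofReal_le_ofReal (hJb k t ht))
      _ = ENNReal.ofReal (b k) * ENNReal.ofReal T := by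
          rw [setLIntegral_const, Real.volume_Ioc, sub_zero]
  have hfin : (∑' k : ℤ, ENNReal.ofReal (b k) * ENNReal.ofReal T) < ⊤ := by
    rw [ENNReal.tsum_mul_right, ← ENNReal.ofReal_tsum_of_nonneg hb_nonneg hb_sum]
    exact ENNReal.mul_lt_top ENNReal.ofReal_lt_top ENNReal.ofReal_lt_top
  exact ne_of_lt (lt_of_le_of_lt (ENNReal.tsum_le_tsum hA) hfin)
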